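/- Let σ_e, σ_d, σ_W > 0, μ_e, μ_d ∈ ℝ, δ = μ_e − μ_d, P̄ > 0. Define A = √(P̄/(δ² + σ_e²)), C = −Aμ_d, K = Aσ_d²/(A²σ_d² + σ_W²), L = μ_d, and ν = K/A − K². Then: (i) ν > 0; (ii) A = K/(K² + ν); (iii) C = −KL/(K² + ν); (iv) L = (σ_W²μ_d − ACσ_d²)/(A²σ_d² + σ_W²); and (v) A²(δ² + σ_e²) = P̄, i.e., the expectation of (Am + C)² under gaussianReal μ_e σ_e² equals P̄. -/

import Mathlib

open MeasureTheory ProbabilityTheory Real Set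
open scoped NNReal ENNReal


lemma int_odd_gauss {b : ℝ} (hb : 0 < b) : ∫ x : ℝ, x * Real.exp (-b * x ^ 2) = 0 := by
  have h := (Measure.measurePreserving_neg (volume : Measure ℝ)).integral_comp
    (Homeomorph.neg ℝ).measurableEmbedding (fun x : ℝ => x * Real.exp (-b * x ^ 2))
  simp only [Homeomorph.neg, Homeomorph.homeomorph_mk_coe, Equiv.neg_apply, neg_sq,
    neg_mul, mul_assoc] at h
  rw [integral_neg] at h
  simp only [← neg_mul] at h
  linarith

lemma int_sq_gauss {b : ℝ} (hb : 0 < b) :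
    ∫ x : ℝ, x ^ 2 * Real.exp (-b * x ^ 2) = Real.sqrt (π / b) / (2 * b) := by
  have hint : Integrable (fun x : ℝ => x ^ 2 * Real.exp (-b * x ^ 2)) := by
    have := integrable_rpow_mul_exp_neg_mul_sq hb (s := 2) (by norm_num)
    convert this using 2 with x
    rw [show ((2:ℝ) = ((2:ℕ):ℝ)) by norm_num, Real.rpow_natCast]
  have hsplit := intervalIntegral.integral_Iic_add_Ioi (b := (0:ℝ)) (f := fun x : ℝ => x ^ 2 * Real.exp (-b * x ^ 2))
    hint.integrableOn hint.integrableOn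
  have heven : ∫ x in Iic (0:ℝ), x ^ 2 * Real.exp (-b * x ^ 2)
      = ∫ x in Ioi (0:ℝ), x ^ 2 * Real.exp (-b * x ^ 2) := by
    rw [show Iic (0:ℝ) = Iic (-0) by norm_num,
      ← integral_comp_neg_Ioi (f := fun x : ℝ => x ^ 2 * Real.exp (-b * x ^ 2))]
    simp
  have hIoi : ∫ x in Ioi (0:ℝ), x ^ 2 * Real.exp (-b * x ^ 2)
      = b ^ (-(2 + 1) / 2 : ℝ) * (1 / 2) * Real.Gamma ((2 + 1) / 2) := by
    rw [← integral_rpow_mul_exp_neg_mul_rpow (p := 2) (q := 2) (by norm_num) (by norm_num) hb]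
    refine setIntegral_congr_fun measurableSet_Ioi (fun x hx => ?_)
    norm_num
  have hG : Real.Gamma (((2:ℝ) + 1) / 2) = Real.sqrt π / 2 := by
    rw [show ((2:ℝ) + 1)/2 = 1/2 + 1 by norm_num, Real.Gamma_add_one (by norm_num),
      Real.Gamma_one_half_eq]
    ring
  have hb12 : (0:ℝ) < b ^ ((1:ℝ)/2) := Real.rpow_pos_of_pos hb _
  have hbpow : b ^ (-(2 + 1) / 2 : ℝ) = (b ^ ((1:ℝ)/2) * b)⁻¹ := by
    rw [show (-(2 + 1) / 2 : ℝ) = -((1:ℝ)/2 + 1) by norm_num, Real.rpow_neg hb.le,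
      Real.rpow_add hb, Real.rpow_one]
  have hsqrt : Real.sqrt (π / b) = Real.sqrt π / b ^ ((1:ℝ)/2) := by
    rw [Real.sqrt_div pi_nonneg, Real.sqrt_eq_rpow, Real.sqrt_eq_rpow]
  rw [← hsplit, heven, hIoi, hG, hbpow, hsqrt]
  field_simp
  ring

lemma integrable_sq_gauss {b : ℝ} (hb : 0 < b) :
    Integrable (fun x : ℝ => x ^ 2 * Real.exp (-b * x ^ 2)) := by
  have := integrable_rpow_mul_exp_neg_mul_sq hb (s := 2) (by norm_num)
  convert this using 2 with x
  norm_num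

lemma gauss_affine_sq (μ : ℝ) (v : ℝ≥0) (hv : 0 < (v:ℝ)) (a c : ℝ) :
    ∫ x, (a * x + c) ^ 2 ∂(gaussianReal μ v) = a ^ 2 * v + (a * μ + c) ^ 2 := by
  have hv' : v ≠ 0 := by simpa using hv.ne'
  set b : ℝ := (2 * (v:ℝ))⁻¹ with hbdef
  have hb : 0 < b := by positivity
  set c0 : ℝ := (Real.sqrt (2 * π * v))⁻¹ with hc0def
  set D : ℝ := a * μ + c with hDdef
  rw [gaussianReal_of_var_ne_zero _ hv']
  have hmeq : volume.withDensity (gaussianPDF μ v)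
      = volume.withDensity (fun x => ((gaussianPDFReal μ v x).toNNReal : ℝ≥0∞)) := rfl
  rw [hmeq, integral_withDensity_eq_integral_smul
    ((measurable_gaussianPDFReal μ v).real_toNNReal) _]
  have hpt : ∀ x : ℝ, (gaussianPDFReal μ v x).toNNReal • (a * x + c) ^ 2
      = (fun y => c0 * Real.exp (-b * y ^ 2) * (a * y + D) ^ 2) (x - μ) := by
    intro x
    have hnn := gaussianPDFReal_nonneg μ v x
    rw [NNReal.smul_def, Real.coe_toNNReal _ hnn, smul_eq_mul]
    simp only [gaussianPDFReal]
    have harg : -(x - μ) ^ 2 / (2 * (v:ℝ)) = -b * (x - μ) ^ 2 := by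
      rw [hbdef]; field_simp
    rw [harg]
    have : a * (x - μ) + D = a * x + c := by rw [hDdef]; ring
    rw [this]
  rw [integral_congr_ae (ae_of_all _ hpt),
    integral_sub_right_eq_self (fun y => c0 * Real.exp (-b * y ^ 2) * (a * y + D) ^ 2) μ]
  have hpt2 : ∀ y : ℝ, c0 * Real.exp (-b * y ^ 2) * (a * y + D) ^ 2
      = (a ^ 2 * c0) * (y ^ 2 * Real.exp (-b * y ^ 2))
        + ((2 * a * D * c0) * (y * Real.exp (-b * y ^ 2))
        + (D ^ 2 * c0) * Real.exp (-b * y ^ 2)) := by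
    intro y; ring
  rw [integral_congr_ae (ae_of_all _ hpt2), integral_add, integral_add, integral_const_mul,
    integral_const_mul, integral_const_mul, int_sq_gauss hb, int_odd_gauss hb,
    integral_gaussian]
  rotate_left
  · exact ((integrable_mul_exp_neg_mul_sq hb).const_mul _)
  · exact ((integrable_exp_neg_mul_sq hb).const_mul _)
  · exact ((integrable_sq_gauss hb).const_mul _)
  · exact (((integrable_mul_exp_neg_mul_sq hb).const_mul _).add
      ((integrable_exp_neg_mul_sq hb).const_mul _))
  have hdiv : π / b = 2 * π * v := by rw [hbdef]; field_simp
  have h2b : (2 * b) = (v:ℝ)⁻¹ := by rw [hbdef]; field_simp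
  have hsq : Real.sqrt (2 * π * (v:ℝ)) ≠ 0 := by
    refine Real.sqrt_ne_zero'.mpr (by positivity)
  rw [hdiv, h2b, hc0def]
  field_simp
  ring


theorem stmt13 (σe σd σW μe μd Pbar : ℝ)
    (hσe : 0 < σe) (hσd : 0 < σd) (hσW : 0 < σW) (hP : 0 < Pbar) :
    let δ : ℝ := μe - μd
    let A : ℝ := Real.sqrt (Pbar / (δ ^ 2 + σe ^ 2))
    let C : ℝ := -A * μd
    let K : ℝ := A * σd ^ 2 / (A ^ 2 * σd ^ 2 + σW ^ 2)
    let L : ℝ := μd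
    let ν : ℝ := K / A - K ^ 2
    (0 < ν)
    ∧ A = K / (K ^ 2 + ν)
    ∧ C = -(K * L) / (K ^ 2 + ν)
    ∧ L = (σW ^ 2 * μd - A * C * σd ^ 2) / (A ^ 2 * σd ^ 2 + σW ^ 2)
    ∧ A ^ 2 * (δ ^ 2 + σe ^ 2) = Pbar
    ∧ ∫ m, (A * m + C) ^ 2 ∂(gaussianReal μe ⟨σe ^ 2, sq_nonneg σe⟩) = Pbar := by
  intro δ A C K L ν
  have hden : 0 < δ ^ 2 + σe ^ 2 := by positivity
  have hA : 0 < A := Real.sqrt_pos.mpr (by positivity)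
  have hA2 : A ^ 2 = Pbar / (δ ^ 2 + σe ^ 2) := Real.sq_sqrt (by positivity)
  have hPA : A ^ 2 * (δ ^ 2 + σe ^ 2) = Pbar := by
    rw [hA2]; field_simp
  have hD : 0 < A ^ 2 * σd ^ 2 + σW ^ 2 := by positivity
  have hK : K = A * σd ^ 2 / (A ^ 2 * σd ^ 2 + σW ^ 2) := rfl
  have hKpos : 0 < K := by rw [hK]; positivity
  have hν : ν = σd ^ 2 * σW ^ 2 / (A ^ 2 * σd ^ 2 + σW ^ 2) ^ 2 := by
    show K / A - K ^ 2 = _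
    rw [hK]
    field_simp
    ring
  have hνpos : 0 < ν := by rw [hν]; positivity
  have hKν : K ^ 2 + ν = K / A := by show K ^ 2 + (K / A - K ^ 2) = K / A; ring
  refine ⟨hνpos, ?_, ?_, ?_, hPA, ?_⟩
  · rw [hKν]
    field_simp
  · rw [hKν]
    show -A * μd = -(K * μd) / (K / A)
    rw [div_div_eq_mul_div]
    field_simp
  · show μd = (σW ^ 2 * μd - A * (-A * μd) * σd ^ 2) / (A ^ 2 * σd ^ 2 + σW ^ 2)
    rw [eq_div_iff hD.ne']
    ring
  · rw [gauss_affine_sq μe ⟨σe ^ 2, sq_nonneg σe⟩ (by show (0:ℝ) < σe ^ 2; exact pow_pos hσe 2) A C]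
    have : A * μe + C = A * δ := by show A * μe + -A * μd = A * δ; simp [δ]; ring
    rw [this]
    show A ^ 2 * σe ^ 2 + (A * δ) ^ 2 = Pbar
    nlinarith [hPA]
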